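/- Riesz-representer identity for the outcome component of the efficient influence function: define b_t(Y,X) := Y + Y e^{γ_t s_t(Y)} π_{1−t}(X)/(π_t(X) μ₁(X)) − e^{γ_t s_t(Y)} μ_Y(X) π_{1−t}(X)/(π_t(X) μ₁(X)²) − μ_t(Y;X). Then for every bounded measurable k : ℝ × ℝ^p → ℝ satisfying E[ k(Y,X) 1{T=t} | σ(X) ] = 0 almost surely, one has E[ 1{T=t} b_t(Y,X) k(Y,X) ] = E[ ( μ_t(Y e^{γ_t s_t(Y)} k(Y,X); X)/μ₁(X) − μ_t(e^{γ_t s_t(Y)} k(Y,X); X) · μ_Y(X)/μ₁(X)² )·π_{1−t}(X) + μ_t(Y k(Y,X); X)·π_t(X) ]. -/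

import Mathlib

open MeasureTheory Real

set_option maxHeartbeats 1000000

/-- Riesz-representer identity for the outcome component of the efficient
influence function: with `b_t(Y,X)` as in the efficient influence function, for every bounded
measurable `k(Y,X)` with `E[k(Y,X)1{T=t}|σ(X)] = 0` a.s.,
`E[1{T=t} b_t(Y,X) k(Y,X)] = E[(μ_t(Ye^{γs}k;X)/μ₁(X) − μ_t(e^{γs}k;X)μ_Y(X)/μ₁(X)²)π_{1−t}(X)
  + μ_t(Yk;X)π_t(X)]`. -/
theorem riesz_representer_identity
    {Ω : Type*} [MeasurableSpace Ω] (P : Measure Ω) [IsProbabilityMeasure P]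
    {p : ℕ} (X : Ω → (Fin p → ℝ)) (T : Ω → ℝ) (Y : Ω → ℝ)
    (hX : Measurable X) (hT : Measurable T) (hY : Measurable Y)
    (hTval : ∀ ω, T ω = 0 ∨ T ω = 1)
    (t : ℝ) (ht : t = 0 ∨ t = 1)
    (s : ℝ → ℝ) (hs : Measurable s) (γ : ℝ)
    -- versions of the conditional treatment probabilities given `σ(X)`
    (πt πs : (Fin p → ℝ) → ℝ) (hπt : Measurable πt) (hπs : Measurable πs)
    (hπtv : (fun ω => πt (X ω)) =ᵐ[P]
      P[(fun ω => if T ω = t then (1 : ℝ) else 0) | MeasurableSpace.comap X inferInstance])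
    (hπsv : (fun ω => πs (X ω)) =ᵐ[P]
      P[(fun ω => if T ω = 1 - t then (1 : ℝ) else 0) | MeasurableSpace.comap X inferInstance])
    -- positivity
    (ε : ℝ) (hε : 0 < ε)
    (hpos : ∀ᵐ ω ∂P, ε ≤ πt (X ω) ∧ πt (X ω) ≤ 1 - ε)
    -- integrability assumptions
    (hYInt : Integrable Y P)
    (hExpInt : Integrable (fun ω => Real.exp (γ * s (Y ω))) P)
    (hYExpInt : Integrable (fun ω => Y ω * Real.exp (γ * s (Y ω))) P)
    -- versions of the conditional means `μ_t(Y;X)`, `μ₁(X) := μ_t(e^{γs(Y)};X)`,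
    -- `μ_Y(X) := μ_t(Ye^{γs(Y)};X)`
    (muY muE muYE : (Fin p → ℝ) → ℝ)
    (hmuYm : Measurable muY) (hmuEm : Measurable muE) (hmuYEm : Measurable muYE)
    (hmuY : (fun ω => muY (X ω)) =ᵐ[P] fun ω =>
      (P[(fun ω => Y ω * (if T ω = t then (1 : ℝ) else 0)) |
        MeasurableSpace.comap X inferInstance]) ω / πt (X ω))
    (hmuE : (fun ω => muE (X ω)) =ᵐ[P] fun ω =>
      (P[(fun ω => Real.exp (γ * s (Y ω)) * (if T ω = t then (1 : ℝ) else 0)) |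
        MeasurableSpace.comap X inferInstance]) ω / πt (X ω))
    (hmuYE : (fun ω => muYE (X ω)) =ᵐ[P] fun ω =>
      (P[(fun ω => Y ω * Real.exp (γ * s (Y ω)) * (if T ω = t then (1 : ℝ) else 0)) |
        MeasurableSpace.comap X inferInstance]) ω / πt (X ω))
    (hmuEpos : ∀ᵐ ω ∂P, ε ≤ muE (X ω)) :
    -- the identity, for every admissible `k` and versions `A`, `B`, `C` of the conditional
    -- means `μ_t(Ye^{γs(Y)}k(Y,X);X)`, `μ_t(e^{γs(Y)}k(Y,X);X)`, `μ_t(Yk(Y,X);X)`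
    ∀ k : ℝ → (Fin p → ℝ) → ℝ,
      Measurable (fun q : ℝ × (Fin p → ℝ) => k q.1 q.2) →
      (∃ C, ∀ y x, |k y x| ≤ C) →
      ((P[(fun ω => k (Y ω) (X ω) * (if T ω = t then (1 : ℝ) else 0)) |
          MeasurableSpace.comap X inferInstance]) =ᵐ[P] 0) →
      ∀ A B C : (Fin p → ℝ) → ℝ,
        ((fun ω => A (X ω)) =ᵐ[P] fun ω =>
          (P[(fun ω => Y ω * Real.exp (γ * s (Y ω)) * k (Y ω) (X ω) *
              (if T ω = t then (1 : ℝ) else 0)) |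
            MeasurableSpace.comap X inferInstance]) ω / πt (X ω)) →
        ((fun ω => B (X ω)) =ᵐ[P] fun ω =>
          (P[(fun ω => Real.exp (γ * s (Y ω)) * k (Y ω) (X ω) *
              (if T ω = t then (1 : ℝ) else 0)) |
            MeasurableSpace.comap X inferInstance]) ω / πt (X ω)) →
        ((fun ω => C (X ω)) =ᵐ[P] fun ω =>
          (P[(fun ω => Y ω * k (Y ω) (X ω) * (if T ω = t then (1 : ℝ) else 0)) |
            MeasurableSpace.comap X inferInstance]) ω / πt (X ω)) →
        ∫ ω, (if T ω = t then (1 : ℝ) else 0) *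
            (Y ω + Y ω * Real.exp (γ * s (Y ω)) * πs (X ω) / (πt (X ω) * muE (X ω))
              - Real.exp (γ * s (Y ω)) * muYE (X ω) * πs (X ω) / (πt (X ω) * muE (X ω) ^ 2)
              - muY (X ω)) * k (Y ω) (X ω) ∂P =
          ∫ ω, ((A (X ω) / muE (X ω) - B (X ω) * muYE (X ω) / muE (X ω) ^ 2) * πs (X ω)
            + C (X ω) * πt (X ω)) ∂P := by
  intro k hkm hkb hknull A B C hA hB hC
  obtain ⟨Ck, hCk⟩ := hkb
  have hCk0 : (0:ℝ) ≤ Ck := le_trans (abs_nonneg _) (hCk 0 0)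
  have hm : MeasurableSpace.comap X inferInstance ≤ ‹MeasurableSpace Ω› :=
    measurable_iff_comap_le.mp hX
  have hXm : @Measurable Ω (Fin p → ℝ) (MeasurableSpace.comap X inferInstance) _ X := fun u hu => ⟨u, hu, rfl⟩
  have smm : ∀ (w : (Fin p → ℝ) → ℝ), Measurable w →
      StronglyMeasurable[(MeasurableSpace.comap X inferInstance)] fun ω => w (X ω) :=
    fun w hw => (hw.comp hXm).stronglyMeasurable
  -- basic measurability
  have hkY : Measurable fun ω => k (Y ω) (X ω) := hkm.comp (hY.prodMk hX)
  have hIm : Measurable fun ω => (if T ω = t then (1:ℝ) else 0) :=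
    Measurable.ite (hT (measurableSet_singleton t)) measurable_const measurable_const
  have hI01 : ∀ ω, 0 ≤ (if T ω = t then (1:ℝ) else 0) ∧ (if T ω = t then (1:ℝ) else 0) ≤ 1 := by
    intro ω; split <;> norm_num
  have hEm : Measurable fun ω => Real.exp (γ * s (Y ω)) := ((hs.comp hY).const_mul γ).exp
  -- the key integrand pieces
  set g1 : Ω → ℝ := fun ω => Y ω * k (Y ω) (X ω) * (if T ω = t then (1:ℝ) else 0) with hg1d
  set g2 : Ω → ℝ := fun ω =>
    Y ω * Real.exp (γ * s (Y ω)) * k (Y ω) (X ω) * (if T ω = t then (1:ℝ) else 0) with hg2d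
  set g3 : Ω → ℝ := fun ω =>
    Real.exp (γ * s (Y ω)) * k (Y ω) (X ω) * (if T ω = t then (1:ℝ) else 0) with hg3d
  set g4 : Ω → ℝ := fun ω => k (Y ω) (X ω) * (if T ω = t then (1:ℝ) else 0) with hg4d
  set gE : Ω → ℝ := fun ω => Real.exp (γ * s (Y ω)) * (if T ω = t then (1:ℝ) else 0) with hgEd
  set gYE : Ω → ℝ := fun ω =>
    Y ω * Real.exp (γ * s (Y ω)) * (if T ω = t then (1:ℝ) else 0) with hgYEd
  set gY : Ω → ℝ := fun ω => Y ω * (if T ω = t then (1:ℝ) else 0) with hgYd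
  have hg1m : Measurable g1 := (hY.mul hkY).mul hIm
  have hg2m : Measurable g2 := ((hY.mul hEm).mul hkY).mul hIm
  have hg3m : Measurable g3 := (hEm.mul hkY).mul hIm
  have hg4m : Measurable g4 := hkY.mul hIm
  have hgEm : Measurable gE := hEm.mul hIm
  -- pointwise bound helper
  have hbd3 : ∀ (a b c d : ℝ), |b| ≤ d → |c| ≤ 1 → |a * b * c| ≤ d * |a| := by
    intro a b c d hb hc
    rw [abs_mul, abs_mul]
    calc |a| * |b| * |c| ≤ (|a| * d) * 1 := by
          have hd : 0 ≤ d := le_trans (abs_nonneg _) hb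
          exact mul_le_mul (mul_le_mul le_rfl hb (abs_nonneg _) (abs_nonneg _)) hc
            (abs_nonneg _) (mul_nonneg (abs_nonneg _) hd)
      _ = d * |a| := by ring
  have habsI : ∀ ω, |(if T ω = t then (1:ℝ) else 0)| ≤ 1 := by intro ω; split <;> norm_num
  -- integrability of the pieces
  have hg1i : Integrable g1 P := by
    refine (hYInt.abs.const_mul Ck).mono' hg1m.aestronglyMeasurable (ae_of_all _ fun ω => ?_)
    exact hbd3 _ _ _ _ (hCk _ _) (habsI ω)
  have hg2i : Integrable g2 P := by
    refine (hYExpInt.abs.const_mul Ck).mono' hg2m.aestronglyMeasurable (ae_of_all _ fun ω => ?_)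
    exact hbd3 _ _ _ _ (hCk _ _) (habsI ω)
  have hg3i : Integrable g3 P := by
    refine (hExpInt.abs.const_mul Ck).mono' hg3m.aestronglyMeasurable (ae_of_all _ fun ω => ?_)
    exact hbd3 _ _ _ _ (hCk _ _) (habsI ω)
  have hg4i : Integrable g4 P := by
    refine (integrable_const Ck).mono' hg4m.aestronglyMeasurable (ae_of_all _ fun ω => ?_)
    calc ‖g4 ω‖ = |k (Y ω) (X ω)| * |(if T ω = t then (1:ℝ) else 0)| := abs_mul _ _
      _ ≤ Ck * 1 := mul_le_mul (hCk _ _) (habsI ω) (abs_nonneg _) hCk0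
      _ = Ck := mul_one _
  have hgEi : Integrable gE P := by
    refine hExpInt.abs.mono' hgEm.aestronglyMeasurable (ae_of_all _ fun ω => ?_)
    calc ‖gE ω‖ = |Real.exp (γ * s (Y ω))| * |(if T ω = t then (1:ℝ) else 0)| := abs_mul _ _
      _ ≤ |Real.exp (γ * s (Y ω))| * 1 :=
          mul_le_mul_of_nonneg_left (habsI ω) (abs_nonneg _)
      _ = |Real.exp (γ * s (Y ω))| := mul_one _
  -- a.e. positivity facts
  have hπtpos : ∀ᵐ ω ∂P, 0 < πt (X ω) := hpos.mono fun ω h => lt_of_lt_of_le hε h.1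
  have hπs01 : ∀ᵐ ω ∂P, 0 ≤ πs (X ω) ∧ πs (X ω) ≤ 1 := by
    have hindi : Integrable (fun ω => if T ω = 1 - t then (1:ℝ) else 0) P := by
      refine (integrable_const (1:ℝ)).mono'
        (Measurable.ite (hT (measurableSet_singleton (1-t))) measurable_const
          measurable_const).aestronglyMeasurable (ae_of_all _ fun ω => ?_)
      split <;> simp
    have h0 : (0:Ω → ℝ) ≤ᵐ[P] P[(fun ω => if T ω = 1 - t then (1:ℝ) else 0)|(MeasurableSpace.comap X inferInstance)] :=
      condExp_nonneg (ae_of_all _ fun ω => by dsimp only; split <;> norm_num)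
    have h1 : P[(fun ω => if T ω = 1 - t then (1:ℝ) else 0)|(MeasurableSpace.comap X inferInstance)] ≤ᵐ[P] fun _ => (1:ℝ) := by
      have hc := condExp_const (μ := P) hm (1:ℝ)
      have h2 := condExp_mono (μ := P) (m := (MeasurableSpace.comap X inferInstance)) hindi (integrable_const (1:ℝ))
        (ae_of_all _ fun ω => by dsimp only; split <;> norm_num)
      rwa [hc] at h2
    filter_upwards [hπsv, h0, h1] with ω he h0' h1'
    rw [he]
    exact ⟨h0', h1'⟩
  -- conditional expectation of `gE` in terms of `muE`
  have hcgE : P[gE|(MeasurableSpace.comap X inferInstance)] =ᵐ[P] fun ω => muE (X ω) * πt (X ω) := by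
    filter_upwards [hmuE, hπtpos] with ω h1 h2
    rw [h1, div_mul_cancel₀ _ (ne_of_gt h2)]
  -- a.e. bounds on the versions
  have hmuYEbd : ∀ᵐ ω ∂P, |muYE (X ω)| ≤ ε⁻¹ * |(P[gYE|(MeasurableSpace.comap X inferInstance)]) ω| := by
    filter_upwards [hmuYE, hpos] with ω h1 h2
    rw [h1, abs_div]
    have hπ : ε ≤ |πt (X ω)| := le_trans h2.1 (le_abs_self _)
    calc |(P[gYE|(MeasurableSpace.comap X inferInstance)]) ω| / |πt (X ω)|
        ≤ |(P[gYE|(MeasurableSpace.comap X inferInstance)]) ω| / ε :=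
          div_le_div₀ (abs_nonneg _) le_rfl hε hπ
      _ = ε⁻¹ * |(P[gYE|(MeasurableSpace.comap X inferInstance)]) ω| := by rw [div_eq_mul_inv, mul_comm]
  have hmuYbd : ∀ᵐ ω ∂P, |muY (X ω)| ≤ ε⁻¹ * |(P[gY|(MeasurableSpace.comap X inferInstance)]) ω| := by
    filter_upwards [hmuY, hpos] with ω h1 h2
    rw [h1, abs_div]
    have hπ : ε ≤ |πt (X ω)| := le_trans h2.1 (le_abs_self _)
    calc |(P[gY|(MeasurableSpace.comap X inferInstance)]) ω| / |πt (X ω)|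
        ≤ |(P[gY|(MeasurableSpace.comap X inferInstance)]) ω| / ε :=
          div_le_div₀ (abs_nonneg _) le_rfl hε hπ
      _ = ε⁻¹ * |(P[gY|(MeasurableSpace.comap X inferInstance)]) ω| := by rw [div_eq_mul_inv, mul_comm]
  -- pull-out lemma
  have pull : ∀ (w gg : Ω → ℝ), StronglyMeasurable[(MeasurableSpace.comap X inferInstance)] w → Integrable gg P →
      Integrable (fun ω => w ω * gg ω) P →
      ∫ ω, w ω * gg ω ∂P = ∫ ω, w ω * (P[gg|(MeasurableSpace.comap X inferInstance)]) ω ∂P := by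
    intro w gg hw hgg hwgg
    calc ∫ ω, w ω * gg ω ∂P = ∫ ω, (P[w * gg|(MeasurableSpace.comap X inferInstance)]) ω ∂P := (integral_condExp hm).symm
      _ = _ := integral_congr_ae (condExp_mul_of_stronglyMeasurable_left hw (by exact hwgg) hgg)
  -- pointwise bound |g3| ≤ Ck * gE
  have hg3bd : ∀ ω, |g3 ω| ≤ Ck * gE ω := by
    intro ω
    simp only [hg3d, hgEd]
    rw [abs_mul, abs_mul, abs_of_pos (Real.exp_pos _), abs_of_nonneg (hI01 ω).1]
    calc Real.exp (γ * s (Y ω)) * |k (Y ω) (X ω)| * (if T ω = t then (1:ℝ) else 0)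
        ≤ Real.exp (γ * s (Y ω)) * Ck * (if T ω = t then (1:ℝ) else 0) :=
          mul_le_mul_of_nonneg_right
            (mul_le_mul_of_nonneg_left (hCk _ _) (Real.exp_pos _).le) (hI01 ω).1
      _ = Ck * (Real.exp (γ * s (Y ω)) * (if T ω = t then (1:ℝ) else 0)) := by ring
  -- |P[g3|(MeasurableSpace.comap X inferInstance)]| ≤ Ck * P[gE|(MeasurableSpace.comap X inferInstance)] a.e.
  have hcg3bd : ∀ᵐ ω ∂P, |(P[g3|(MeasurableSpace.comap X inferInstance)]) ω| ≤ Ck * (P[gE|(MeasurableSpace.comap X inferInstance)]) ω := by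
    have hup : P[g3|(MeasurableSpace.comap X inferInstance)] ≤ᵐ[P] P[Ck • gE|(MeasurableSpace.comap X inferInstance)] := by
      refine condExp_mono hg3i (hgEi.smul Ck) (ae_of_all _ fun ω => ?_)
      have := hg3bd ω
      have h2 : g3 ω ≤ |g3 ω| := le_abs_self _
      simpa [smul_eq_mul] using le_trans h2 this
    have hlo : P[-(Ck • gE)|(MeasurableSpace.comap X inferInstance)] ≤ᵐ[P] P[g3|(MeasurableSpace.comap X inferInstance)] := by
      refine condExp_mono ((hgEi.smul Ck).neg) hg3i (ae_of_all _ fun ω => ?_)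
      have := hg3bd ω
      have h2 : -|g3 ω| ≤ g3 ω := neg_abs_le _
      simp only [Pi.neg_apply, Pi.smul_apply, smul_eq_mul]
      linarith
    have hsm := condExp_smul (μ := P) (m := (MeasurableSpace.comap X inferInstance)) Ck gE
    have hng := condExp_neg (μ := P) (m := (MeasurableSpace.comap X inferInstance)) (Ck • gE)
    filter_upwards [hup, hlo, hsm, hng] with ω h1 h2 h3 h4
    simp only [Pi.smul_apply, smul_eq_mul, Pi.neg_apply] at h1 h2 h3 h4
    rw [abs_le]
    constructor <;> linarith
  -- the hard integrability
  have hφ : Integrable (fun ω => |muYE (X ω)| / muE (X ω) ^ 2 * gE ω) P := by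
    have hvm : Measurable fun x => |muYE x| / muE x ^ 2 := hmuYEm.abs.div (hmuEm.pow_const 2)
    have hgEnn : ∀ ω, 0 ≤ gE ω := fun ω => mul_nonneg (exp_pos _).le (hI01 ω).1
    have hvnn : ∀ x, 0 ≤ |muYE x| / muE x ^ 2 := fun x => div_nonneg (abs_nonneg _) (sq_nonneg _)
    have hminb : ∀ (n : ℕ) x, |min (|muYE x| / muE x ^ 2) (n:ℝ)| ≤ (n:ℝ) := by
      intro n x
      rw [abs_le]
      exact ⟨le_trans (by norm_num : -(n:ℝ) ≤ 0) (le_min (hvnn x) (n.cast_nonneg)),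
        min_le_right _ _⟩
    have hFmeas : ∀ n : ℕ,
        Measurable fun ω => min (|muYE (X ω)| / muE (X ω) ^ 2) (n:ℝ) * gE ω :=
      fun n => (((hvm.comp hX)).min measurable_const).mul hgEm
    have hFint : ∀ n : ℕ,
        Integrable (fun ω => min (|muYE (X ω)| / muE (X ω) ^ 2) (n:ℝ) * gE ω) P := by
      intro n
      refine (hgEi.const_mul (n:ℝ)).mono' (hFmeas n).aestronglyMeasurable
        (ae_of_all _ fun ω => ?_)
      rw [Real.norm_eq_abs, abs_mul, abs_of_nonneg (hgEnn ω)]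
      exact mul_le_mul_of_nonneg_right (hminb n _) (hgEnn ω)
    have hDi : Integrable (fun ω => ε⁻¹ * ε⁻¹ * |(P[gYE|(MeasurableSpace.comap X inferInstance)]) ω|) P :=
      (integrable_condExp.abs).const_mul _
    have hub : ∀ n : ℕ, ∫ ω, min (|muYE (X ω)| / muE (X ω) ^ 2) (n:ℝ) * gE ω ∂P
        ≤ ∫ ω, ε⁻¹ * ε⁻¹ * |(P[gYE|(MeasurableSpace.comap X inferInstance)]) ω| ∂P := by
      intro n
      rw [pull (fun ω => min (|muYE (X ω)| / muE (X ω) ^ 2) (n:ℝ)) gE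
        (smm _ (hvm.min measurable_const)) hgEi (hFint n)]
      refine integral_mono_ae ?_ hDi ?_
      · refine ((integrable_condExp (f := gE)
            (m := MeasurableSpace.comap X inferInstance)).norm.const_mul (n:ℝ)).mono'
          (((hvm.comp hX).min measurable_const).aestronglyMeasurable.mul
            (stronglyMeasurable_condExp.mono hm).aestronglyMeasurable)
          (ae_of_all _ fun ω => ?_)
        rw [Real.norm_eq_abs, abs_mul]
        exact mul_le_mul_of_nonneg_right (hminb n _) (abs_nonneg _)
      · filter_upwards [hcgE, hpos, hmuEpos, hmuYEbd] with ω h1 h2 h3 h4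
        rw [h1]
        have hππ : 0 < πt (X ω) := lt_of_lt_of_le hε h2.1
        have hmu : 0 < muE (X ω) := lt_of_lt_of_le hε h3
        calc min (|muYE (X ω)| / muE (X ω) ^ 2) (n:ℝ) * (muE (X ω) * πt (X ω))
            ≤ |muYE (X ω)| / muE (X ω) ^ 2 * (muE (X ω) * πt (X ω)) :=
              mul_le_mul_of_nonneg_right (min_le_left _ _) (by positivity)
          _ = |muYE (X ω)| * πt (X ω) / muE (X ω) := by
              field_simp
          _ ≤ |muYE (X ω)| * 1 / ε :=
              div_le_div₀ (by positivity)
                (mul_le_mul_of_nonneg_left (by linarith [h2.2]) (abs_nonneg _)) hε h3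
          _ = ε⁻¹ * |muYE (X ω)| := by rw [mul_one, div_eq_mul_inv, mul_comm]
          _ ≤ ε⁻¹ * (ε⁻¹ * |(P[gYE|(MeasurableSpace.comap X inferInstance)]) ω|) :=
              mul_le_mul_of_nonneg_left h4 (by positivity)
          _ = ε⁻¹ * ε⁻¹ * |(P[gYE|(MeasurableSpace.comap X inferInstance)]) ω| := by ring
    refine ⟨((hvm.comp hX).mul hgEm).aestronglyMeasurable, ?_⟩
    rw [hasFiniteIntegral_iff_ofReal (ae_of_all _ fun ω => mul_nonneg (hvnn _) (hgEnn ω))]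
    have hsup : ∀ ω, ENNReal.ofReal (|muYE (X ω)| / muE (X ω) ^ 2 * gE ω)
        = ⨆ n : ℕ, ENNReal.ofReal (min (|muYE (X ω)| / muE (X ω) ^ 2) (n:ℝ) * gE ω) := by
      intro ω
      refine le_antisymm ?_ (iSup_le fun n => ENNReal.ofReal_le_ofReal
        (mul_le_mul_of_nonneg_right (min_le_left _ _) (hgEnn ω)))
      refine le_iSup_of_le ⌈|muYE (X ω)| / muE (X ω) ^ 2⌉₊ ?_
      rw [min_eq_left (Nat.le_ceil _)]
    calc ∫⁻ ω, ENNReal.ofReal (|muYE (X ω)| / muE (X ω) ^ 2 * gE ω) ∂P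
        = ∫⁻ ω, ⨆ n : ℕ,
            ENNReal.ofReal (min (|muYE (X ω)| / muE (X ω) ^ 2) (n:ℝ) * gE ω) ∂P :=
          lintegral_congr fun ω => hsup ω
      _ = ⨆ n : ℕ, ∫⁻ ω,
            ENNReal.ofReal (min (|muYE (X ω)| / muE (X ω) ^ 2) (n:ℝ) * gE ω) ∂P := by
          refine lintegral_iSup (fun n => (hFmeas n).ennreal_ofReal) ?_
          intro i j hij ω
          exact ENNReal.ofReal_le_ofReal (mul_le_mul_of_nonneg_right
            (min_le_min le_rfl (Nat.cast_le.mpr hij)) (hgEnn ω))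
      _ = ⨆ n : ℕ, ENNReal.ofReal
            (∫ ω, min (|muYE (X ω)| / muE (X ω) ^ 2) (n:ℝ) * gE ω ∂P) := by
          refine iSup_congr fun n => ?_
          exact (ofReal_integral_eq_lintegral_ofReal (hFint n)
            (ae_of_all _ fun ω => mul_nonneg (le_min (hvnn _) (n.cast_nonneg)) (hgEnn ω))).symm
      _ ≤ ENNReal.ofReal (∫ ω, ε⁻¹ * ε⁻¹ * |(P[gYE|(MeasurableSpace.comap X inferInstance)]) ω| ∂P) :=
          iSup_le fun n => ENNReal.ofReal_le_ofReal (hub n)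
      _ < ⊤ := ENNReal.ofReal_lt_top
  -- integrability of the weighted pieces
  have hw2g2i : Integrable (fun ω => πs (X ω) / (πt (X ω) * muE (X ω)) * g2 ω) P := by
    refine (hYExpInt.abs.const_mul (ε⁻¹ * ε⁻¹ * Ck)).mono'
      (((hπs.comp hX).div ((hπt.comp hX).mul (hmuEm.comp hX))).mul hg2m).aestronglyMeasurable ?_
    filter_upwards [hpos, hmuEpos, hπs01] with ω h2 h3 h4
    have hππ : 0 < πt (X ω) := lt_of_lt_of_le hε h2.1
    have hmu : 0 < muE (X ω) := lt_of_lt_of_le hε h3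
    rw [Real.norm_eq_abs, abs_mul]
    have hw2b : |πs (X ω) / (πt (X ω) * muE (X ω))| ≤ ε⁻¹ * ε⁻¹ := by
      rw [abs_div, abs_of_nonneg h4.1, abs_of_pos (mul_pos hππ hmu)]
      calc πs (X ω) / (πt (X ω) * muE (X ω)) ≤ 1 / (ε * ε) :=
            div_le_div₀ zero_le_one h4.2 (by positivity)
              (mul_le_mul h2.1 h3 hε.le (le_trans hε.le h2.1))
        _ = ε⁻¹ * ε⁻¹ := by rw [one_div, mul_inv]
    have hg2b : |g2 ω| ≤ Ck * |Y ω * Real.exp (γ * s (Y ω))| :=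
      hbd3 _ _ _ _ (hCk _ _) (habsI ω)
    calc |πs (X ω) / (πt (X ω) * muE (X ω))| * |g2 ω|
        ≤ (ε⁻¹ * ε⁻¹) * (Ck * |Y ω * Real.exp (γ * s (Y ω))|) :=
          mul_le_mul hw2b hg2b (abs_nonneg _) (by positivity)
      _ = ε⁻¹ * ε⁻¹ * Ck * |Y ω * Real.exp (γ * s (Y ω))| := by ring
  have hw3g3i : Integrable
      (fun ω => muYE (X ω) * πs (X ω) / (πt (X ω) * muE (X ω) ^ 2) * g3 ω) P := by
    refine (hφ.const_mul (Ck * ε⁻¹)).mono'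
      ((((hmuYEm.comp hX).mul (hπs.comp hX)).div
        ((hπt.comp hX).mul ((hmuEm.comp hX).pow_const 2))).mul hg3m).aestronglyMeasurable ?_
    filter_upwards [hpos, hmuEpos, hπs01] with ω h2 h3 h4
    have hππ : 0 < πt (X ω) := lt_of_lt_of_le hε h2.1
    have hmu : 0 < muE (X ω) := lt_of_lt_of_le hε h3
    have hgEnn : 0 ≤ gE ω := mul_nonneg (exp_pos _).le (hI01 ω).1
    rw [Real.norm_eq_abs, abs_mul]
    have hw3b : |muYE (X ω) * πs (X ω) / (πt (X ω) * muE (X ω) ^ 2)|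
        ≤ ε⁻¹ * (|muYE (X ω)| / muE (X ω) ^ 2) := by
      rw [abs_div, abs_mul, abs_of_nonneg h4.1,
        abs_of_pos (mul_pos hππ (pow_pos hmu 2))]
      calc |muYE (X ω)| * πs (X ω) / (πt (X ω) * muE (X ω) ^ 2)
          ≤ |muYE (X ω)| * 1 / (ε * muE (X ω) ^ 2) :=
            div_le_div₀ (by positivity)
              (mul_le_mul_of_nonneg_left h4.2 (abs_nonneg _)) (by positivity)
              (mul_le_mul_of_nonneg_right h2.1 (by positivity))
        _ = ε⁻¹ * (|muYE (X ω)| / muE (X ω) ^ 2) := by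
            rw [mul_one, mul_comm ε, ← div_div, div_eq_mul_inv (|muYE (X ω)| / _), mul_comm]
    calc |muYE (X ω) * πs (X ω) / (πt (X ω) * muE (X ω) ^ 2)| * |g3 ω|
        ≤ (ε⁻¹ * (|muYE (X ω)| / muE (X ω) ^ 2)) * (Ck * gE ω) :=
          mul_le_mul hw3b (hg3bd ω) (abs_nonneg _) (by positivity)
      _ = Ck * ε⁻¹ * (|muYE (X ω)| / muE (X ω) ^ 2 * gE ω) := by ring
  have hw4g4i : Integrable (fun ω => muY (X ω) * g4 ω) P := by
    refine (((integrable_condExp (f := gY)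
        (m := MeasurableSpace.comap X inferInstance)).abs.const_mul ε⁻¹).const_mul Ck).mono'
      ((hmuYm.comp hX).mul hg4m).aestronglyMeasurable ?_
    filter_upwards [hmuYbd] with ω h1
    rw [Real.norm_eq_abs, abs_mul]
    have hg4b : |g4 ω| ≤ Ck := by
      calc |g4 ω| = |k (Y ω) (X ω)| * |(if T ω = t then (1:ℝ) else 0)| := abs_mul _ _
        _ ≤ Ck * 1 := mul_le_mul (hCk _ _) (habsI ω) (abs_nonneg _) hCk0
        _ = Ck := mul_one _
    calc |muY (X ω)| * |g4 ω| ≤ (ε⁻¹ * |(P[gY|(MeasurableSpace.comap X inferInstance)]) ω|) * Ck :=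
          mul_le_mul h1 hg4b (abs_nonneg _) (by positivity)
      _ = Ck * (ε⁻¹ * |(P[gY|(MeasurableSpace.comap X inferInstance)]) ω|) := by ring
  -- integrability of the conditional-expectation pieces
  have hic2 : Integrable (fun ω => πs (X ω) / (πt (X ω) * muE (X ω)) * (P[g2|(MeasurableSpace.comap X inferInstance)]) ω) P := by
    refine ((integrable_condExp (f := g2)
        (m := MeasurableSpace.comap X inferInstance)).norm.const_mul (ε⁻¹ * ε⁻¹)).mono'
      (((hπs.comp hX).div ((hπt.comp hX).mul (hmuEm.comp hX))).aestronglyMeasurable.mul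
        (stronglyMeasurable_condExp.mono hm).aestronglyMeasurable) ?_
    filter_upwards [hpos, hmuEpos, hπs01] with ω h2 h3 h4
    have hππ : 0 < πt (X ω) := lt_of_lt_of_le hε h2.1
    have hmu : 0 < muE (X ω) := lt_of_lt_of_le hε h3
    rw [Real.norm_eq_abs, abs_mul]
    have hw2b : |πs (X ω) / (πt (X ω) * muE (X ω))| ≤ ε⁻¹ * ε⁻¹ := by
      rw [abs_div, abs_of_nonneg h4.1, abs_of_pos (mul_pos hππ hmu)]
      calc πs (X ω) / (πt (X ω) * muE (X ω)) ≤ 1 / (ε * ε) :=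
            div_le_div₀ zero_le_one h4.2 (by positivity)
              (mul_le_mul h2.1 h3 hε.le (le_trans hε.le h2.1))
        _ = ε⁻¹ * ε⁻¹ := by rw [one_div, mul_inv]
    exact mul_le_mul_of_nonneg_right hw2b (abs_nonneg _)
  have hic3 : Integrable
      (fun ω => muYE (X ω) * πs (X ω) / (πt (X ω) * muE (X ω) ^ 2) * (P[g3|(MeasurableSpace.comap X inferInstance)]) ω) P := by
    refine (((integrable_condExp (f := gYE)
        (m := MeasurableSpace.comap X inferInstance)).abs.const_mul (Ck * ε⁻¹ * ε⁻¹ * ε⁻¹)) :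
        Integrable (fun ω => Ck * ε⁻¹ * ε⁻¹ * ε⁻¹ * |(P[gYE|(MeasurableSpace.comap X inferInstance)]) ω|) P).mono'
      ((((hmuYEm.comp hX).mul (hπs.comp hX)).div
        ((hπt.comp hX).mul ((hmuEm.comp hX).pow_const 2))).aestronglyMeasurable.mul
        (stronglyMeasurable_condExp.mono hm).aestronglyMeasurable) ?_
    filter_upwards [hpos, hmuEpos, hπs01, hcg3bd, hcgE, hmuYEbd] with ω h2 h3 h4 h5 h6 h7
    have hππ : 0 < πt (X ω) := lt_of_lt_of_le hε h2.1
    have hmu : 0 < muE (X ω) := lt_of_lt_of_le hε h3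
    rw [Real.norm_eq_abs, abs_mul]
    -- |w3| ≤ ε⁻¹ |muYE|/muE², |P[g3|(MeasurableSpace.comap X inferInstance)]| ≤ Ck muE πt
    have hw3b : |muYE (X ω) * πs (X ω) / (πt (X ω) * muE (X ω) ^ 2)|
        ≤ ε⁻¹ * (|muYE (X ω)| / muE (X ω) ^ 2) := by
      rw [abs_div, abs_mul, abs_of_nonneg h4.1,
        abs_of_pos (mul_pos hππ (pow_pos hmu 2))]
      calc |muYE (X ω)| * πs (X ω) / (πt (X ω) * muE (X ω) ^ 2)
          ≤ |muYE (X ω)| * 1 / (ε * muE (X ω) ^ 2) :=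
            div_le_div₀ (by positivity)
              (mul_le_mul_of_nonneg_left h4.2 (abs_nonneg _)) (by positivity)
              (mul_le_mul_of_nonneg_right h2.1 (by positivity))
        _ = ε⁻¹ * (|muYE (X ω)| / muE (X ω) ^ 2) := by
            rw [mul_one, mul_comm ε, ← div_div, div_eq_mul_inv (|muYE (X ω)| / _), mul_comm]
    have h5' : |(P[g3|(MeasurableSpace.comap X inferInstance)]) ω| ≤ Ck * (muE (X ω) * πt (X ω)) := by rw [← h6]; exact h5
    calc |muYE (X ω) * πs (X ω) / (πt (X ω) * muE (X ω) ^ 2)| * |(P[g3|(MeasurableSpace.comap X inferInstance)]) ω|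
        ≤ (ε⁻¹ * (|muYE (X ω)| / muE (X ω) ^ 2)) * (Ck * (muE (X ω) * πt (X ω))) :=
          mul_le_mul hw3b h5' (abs_nonneg _) (by positivity)
      _ = Ck * ε⁻¹ * (|muYE (X ω)| * πt (X ω) / muE (X ω)) := by
          field_simp
      _ ≤ Ck * ε⁻¹ * (|muYE (X ω)| * 1 / ε) :=
          mul_le_mul_of_nonneg_left
            (div_le_div₀ (by positivity)
              (mul_le_mul_of_nonneg_left (by linarith [h2.2]) (abs_nonneg _)) hε h3)
            (by positivity)
      _ = Ck * ε⁻¹ * (ε⁻¹ * |muYE (X ω)|) := by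
          rw [mul_one, div_eq_mul_inv, mul_comm (|muYE (X ω)|)]
      _ ≤ Ck * ε⁻¹ * (ε⁻¹ * (ε⁻¹ * |(P[gYE|(MeasurableSpace.comap X inferInstance)]) ω|)) :=
          mul_le_mul_of_nonneg_left (mul_le_mul_of_nonneg_left h7 (by positivity))
            (by positivity)
      _ = Ck * ε⁻¹ * ε⁻¹ * ε⁻¹ * |(P[gYE|(MeasurableSpace.comap X inferInstance)]) ω| := by ring
  -- strong measurability of the weights
  have hw2sm : StronglyMeasurable[(MeasurableSpace.comap X inferInstance)] fun ω => πs (X ω) / (πt (X ω) * muE (X ω)) :=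
    smm (fun x => πs x / (πt x * muE x)) (hπs.div (hπt.mul hmuEm))
  have hw3sm : StronglyMeasurable[(MeasurableSpace.comap X inferInstance)]
      fun ω => muYE (X ω) * πs (X ω) / (πt (X ω) * muE (X ω) ^ 2) :=
    smm (fun x => muYE x * πs x / (πt x * muE x ^ 2))
      ((hmuYEm.mul hπs).div (hπt.mul (hmuEm.pow_const 2)))
  have hw4sm : StronglyMeasurable[(MeasurableSpace.comap X inferInstance)] fun ω => muY (X ω) := smm muY hmuYm
  -- combined integrabilities
  have hsum12 : Integrable
      (fun ω => g1 ω + πs (X ω) / (πt (X ω) * muE (X ω)) * g2 ω) P := by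
    exact hg1i.add hw2g2i
  have hsum123 : Integrable
      (fun ω => g1 ω + πs (X ω) / (πt (X ω) * muE (X ω)) * g2 ω
        - muYE (X ω) * πs (X ω) / (πt (X ω) * muE (X ω) ^ 2) * g3 ω) P := by
    exact hsum12.sub hw3g3i
  have hcsum12 : Integrable
      (fun ω => (P[g1|(MeasurableSpace.comap X inferInstance)]) ω + πs (X ω) / (πt (X ω) * muE (X ω)) * (P[g2|(MeasurableSpace.comap X inferInstance)]) ω) P := by
    exact integrable_condExp.add hic2
  -- the vanishing term
  have hzero : ∫ ω, muY (X ω) * g4 ω ∂P = 0 := by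
    rw [pull _ g4 hw4sm hg4i hw4g4i]
    have h0 : (fun ω => muY (X ω) * (P[g4|(MeasurableSpace.comap X inferInstance)]) ω) =ᵐ[P] fun _ => (0:ℝ) := by
      filter_upwards [hknull] with ω h
      simp [h]
    rw [integral_congr_ae h0, integral_zero]
  -- identification of the right-hand side
  have hRae : (fun ω => (A (X ω) / muE (X ω) - B (X ω) * muYE (X ω) / muE (X ω) ^ 2) * πs (X ω)
        + C (X ω) * πt (X ω)) =ᵐ[P]
      fun ω => (P[g1|(MeasurableSpace.comap X inferInstance)]) ω + πs (X ω) / (πt (X ω) * muE (X ω)) * (P[g2|(MeasurableSpace.comap X inferInstance)]) ω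
        - muYE (X ω) * πs (X ω) / (πt (X ω) * muE (X ω) ^ 2) * (P[g3|(MeasurableSpace.comap X inferInstance)]) ω := by
    filter_upwards [hA, hB, hC, hπtpos] with ω ha hb hc hπ
    rw [ha, hb, hc, div_mul_cancel₀ _ (ne_of_gt hπ)]
    ring
  have hR : ∫ ω, ((A (X ω) / muE (X ω) - B (X ω) * muYE (X ω) / muE (X ω) ^ 2) * πs (X ω)
        + C (X ω) * πt (X ω)) ∂P
      = (∫ ω, (P[g1|(MeasurableSpace.comap X inferInstance)]) ω ∂P + ∫ ω, πs (X ω) / (πt (X ω) * muE (X ω)) * (P[g2|(MeasurableSpace.comap X inferInstance)]) ω ∂P)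
        - ∫ ω, muYE (X ω) * πs (X ω) / (πt (X ω) * muE (X ω) ^ 2) * (P[g3|(MeasurableSpace.comap X inferInstance)]) ω ∂P := by
    calc ∫ ω, ((A (X ω) / muE (X ω) - B (X ω) * muYE (X ω) / muE (X ω) ^ 2) * πs (X ω)
          + C (X ω) * πt (X ω)) ∂P
        = ∫ ω, ((P[g1|(MeasurableSpace.comap X inferInstance)]) ω + πs (X ω) / (πt (X ω) * muE (X ω)) * (P[g2|(MeasurableSpace.comap X inferInstance)]) ω
            - muYE (X ω) * πs (X ω) / (πt (X ω) * muE (X ω) ^ 2) * (P[g3|(MeasurableSpace.comap X inferInstance)]) ω) ∂P :=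
          integral_congr_ae hRae
      _ = ∫ ω, ((P[g1|(MeasurableSpace.comap X inferInstance)]) ω + πs (X ω) / (πt (X ω) * muE (X ω)) * (P[g2|(MeasurableSpace.comap X inferInstance)]) ω) ∂P
          - ∫ ω, muYE (X ω) * πs (X ω) / (πt (X ω) * muE (X ω) ^ 2) * (P[g3|(MeasurableSpace.comap X inferInstance)]) ω ∂P :=
          integral_sub hcsum12 hic3
      _ = (∫ ω, (P[g1|(MeasurableSpace.comap X inferInstance)]) ω ∂P + ∫ ω, πs (X ω) / (πt (X ω) * muE (X ω)) * (P[g2|(MeasurableSpace.comap X inferInstance)]) ω ∂P)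
          - ∫ ω, muYE (X ω) * πs (X ω) / (πt (X ω) * muE (X ω) ^ 2) * (P[g3|(MeasurableSpace.comap X inferInstance)]) ω ∂P := by
          rw [integral_add (integrable_condExp : Integrable (P[g1|(MeasurableSpace.comap X inferInstance)]) P) hic2]
  -- main computation
  calc ∫ ω, (if T ω = t then (1 : ℝ) else 0) *
        (Y ω + Y ω * Real.exp (γ * s (Y ω)) * πs (X ω) / (πt (X ω) * muE (X ω))
          - Real.exp (γ * s (Y ω)) * muYE (X ω) * πs (X ω) / (πt (X ω) * muE (X ω) ^ 2)
          - muY (X ω)) * k (Y ω) (X ω) ∂P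
      = ∫ ω, (g1 ω + πs (X ω) / (πt (X ω) * muE (X ω)) * g2 ω
          - muYE (X ω) * πs (X ω) / (πt (X ω) * muE (X ω) ^ 2) * g3 ω
          - muY (X ω) * g4 ω) ∂P := by
        refine integral_congr_ae (ae_of_all _ fun ω => ?_)
        simp only [hg1d, hg2d, hg3d, hg4d]
        ring
    _ = ∫ ω, (g1 ω + πs (X ω) / (πt (X ω) * muE (X ω)) * g2 ω
          - muYE (X ω) * πs (X ω) / (πt (X ω) * muE (X ω) ^ 2) * g3 ω) ∂P
        - ∫ ω, muY (X ω) * g4 ω ∂P := integral_sub hsum123 hw4g4i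
    _ = ∫ ω, (g1 ω + πs (X ω) / (πt (X ω) * muE (X ω)) * g2 ω
          - muYE (X ω) * πs (X ω) / (πt (X ω) * muE (X ω) ^ 2) * g3 ω) ∂P := by
        rw [hzero, sub_zero]
    _ = ∫ ω, (g1 ω + πs (X ω) / (πt (X ω) * muE (X ω)) * g2 ω) ∂P
        - ∫ ω, muYE (X ω) * πs (X ω) / (πt (X ω) * muE (X ω) ^ 2) * g3 ω ∂P :=
        integral_sub hsum12 hw3g3i
    _ = (∫ ω, g1 ω ∂P + ∫ ω, πs (X ω) / (πt (X ω) * muE (X ω)) * g2 ω ∂P)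
        - ∫ ω, muYE (X ω) * πs (X ω) / (πt (X ω) * muE (X ω) ^ 2) * g3 ω ∂P := by
        rw [integral_add hg1i hw2g2i]
    _ = (∫ ω, (P[g1|(MeasurableSpace.comap X inferInstance)]) ω ∂P + ∫ ω, πs (X ω) / (πt (X ω) * muE (X ω)) * (P[g2|(MeasurableSpace.comap X inferInstance)]) ω ∂P)
        - ∫ ω, muYE (X ω) * πs (X ω) / (πt (X ω) * muE (X ω) ^ 2) * (P[g3|(MeasurableSpace.comap X inferInstance)]) ω ∂P := by
        rw [pull _ g2 hw2sm hg2i hw2g2i, pull _ g3 hw3sm hg3i hw3g3i,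
          ← integral_condExp (μ := P) (f := g1) hm]
    _ = ∫ ω, ((A (X ω) / muE (X ω) - B (X ω) * muYE (X ω) / muE (X ω) ^ 2) * πs (X ω)
          + C (X ω) * πt (X ω)) ∂P := hR.symm
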